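/- arXiv:2504.03233 — 2 statements merged into one kernel-verified Lean document; each statement's English description precedes it below -/
import Mathlib

section
/- With the hyperrectangle uncertainty set derived from a sensitivity matrix L (i.e., |fᵢ(x,u) − fᵢ(x′,u)| ≤ Σⱼ L_{ij}|xⱼ − x′ⱼ|), the data-driven Hamiltonian has closed form Ĥ(x,p) = max over data points k of (pᵀv^k − Σᵢ |pᵢ|·(Σⱼ L_{ij}|xⱼ − x^k_j|)), and Ĥ(x,p) ≤ H(x,p) = sup_{u∈U} pᵀ f(x,u). -/
/-- Closed form of the hyperrectangle DDH under a sensitivity-matrix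
Lipschitz condition, and the lower-bound property. -/
theorem ddh_rect_closed_form
    (n m N : ℕ) (hN : 0 < N)
    (f : EuclideanSpace ℝ (Fin n) → (Fin m → ℝ) → EuclideanSpace ℝ (Fin n))
    (U : Set (Fin m → ℝ)) (L : Matrix (Fin n) (Fin n) ℝ) (hL : ∀ i j, 0 ≤ L i j)
    (hLip : ∀ x x' : EuclideanSpace ℝ (Fin n), ∀ u ∈ U, ∀ i,
      |f x u i - f x' u i| ≤ ∑ j, L i j * |x j - x' j|)
    (xs : Fin N → EuclideanSpace ℝ (Fin n)) (us : Fin N → (Fin m → ℝ))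
    (vs : Fin N → EuclideanSpace ℝ (Fin n))
    (hu : ∀ k, us k ∈ U) (hv : ∀ k, vs k = f (xs k) (us k))
    (x p : EuclideanSpace ℝ (Fin n))
    (hH : BddAbove ((fun u => (inner ℝ p (f x u) : ℝ)) '' U)) :
    (⨆ k : Fin N, sInf ((fun w => (inner ℝ p (vs k + w) : ℝ)) ''
        {w : EuclideanSpace ℝ (Fin n) | ∀ i, |w i| ≤ ∑ j, L i j * |x j - xs k j|}))
      = (⨆ k : Fin N, ((inner ℝ p (vs k) : ℝ) - ∑ i, |p i| * ∑ j, L i j * |x j - xs k j|)) ∧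
    (⨆ k : Fin N, ((inner ℝ p (vs k) : ℝ) - ∑ i, |p i| * ∑ j, L i j * |x j - xs k j|))
      ≤ sSup ((fun u => (inner ℝ p (f x u) : ℝ)) '' U) := by
  haveI : Nonempty (Fin N) := ⟨⟨0, hN⟩⟩
  have key : ∀ k : Fin N,
      sInf ((fun w => (inner ℝ p (vs k + w) : ℝ)) ''
        {w : EuclideanSpace ℝ (Fin n) | ∀ i, |w i| ≤ ∑ j, L i j * |x j - xs k j|})
      = (inner ℝ p (vs k) : ℝ) - ∑ i, |p i| * ∑ j, L i j * |x j - xs k j| := by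
    intro k
    set r : Fin n → ℝ := fun i => ∑ j, L i j * |x j - xs k j| with hr
    have hr0 : ∀ i, 0 ≤ r i := fun i => Finset.sum_nonneg fun j _ =>
      mul_nonneg (hL i j) (abs_nonneg _)
    set w0 : EuclideanSpace ℝ (Fin n) := WithLp.toLp 2 (fun i => if 0 ≤ p i then -r i else r i) with hw0
    have hw0mem : w0 ∈ {w : EuclideanSpace ℝ (Fin n) | ∀ i, |w i| ≤ r i} := by
      intro i
      by_cases h : 0 ≤ p i <;>
        simp [hw0, h, abs_of_nonneg (hr0 i), abs_of_nonpos (neg_nonpos.mpr (hr0 i))]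
    have hval : (inner ℝ p (vs k + w0) : ℝ)
        = (inner ℝ p (vs k) : ℝ) - ∑ i, |p i| * r i := by
      rw [inner_add_right, sub_eq_add_neg]
      congr 1
      rw [PiLp.inner_apply, ← Finset.sum_neg_distrib]
      refine Finset.sum_congr rfl fun i _ => ?_
      simp only [RCLike.inner_apply, conj_trivial, hw0]
      by_cases h : 0 ≤ p i
      · simp [h, abs_of_nonneg h, mul_comm]
      · simp [h, abs_of_neg (lt_of_not_ge h), mul_comm]
    have lb : ∀ b ∈ (fun w => (inner ℝ p (vs k + w) : ℝ)) ''
        {w : EuclideanSpace ℝ (Fin n) | ∀ i, |w i| ≤ r i},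
        (inner ℝ p (vs k) : ℝ) - ∑ i, |p i| * r i ≤ b := by
      rintro b ⟨w, hw, rfl⟩
      dsimp only
      rw [inner_add_right, sub_eq_add_neg]
      gcongr
      rw [PiLp.inner_apply, ← Finset.sum_neg_distrib]
      refine Finset.sum_le_sum fun i _ => ?_
      simp only [RCLike.inner_apply, conj_trivial]
      calc -(|p i| * r i) ≤ -(|p i| * |w i|) := by
            exact neg_le_neg (mul_le_mul_of_nonneg_left (hw i) (abs_nonneg _))
        _ = -|p i * w i| := by rw [abs_mul]
        _ ≤ p i * w i := neg_abs_le _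
        _ = w i * p i := mul_comm _ _
    exact le_antisymm (csInf_le ⟨_, lb⟩ ⟨w0, hw0mem, hval⟩)
      (le_csInf ⟨_, w0, hw0mem, rfl⟩ lb)
  constructor
  · exact iSup_congr key
  · refine ciSup_le fun k => ?_
    have h1 : (inner ℝ p (vs k) : ℝ) - ∑ i, |p i| * ∑ j, L i j * |x j - xs k j|
        ≤ (inner ℝ p (f x (us k)) : ℝ) := by
      rw [sub_le_iff_le_add, PiLp.inner_apply, PiLp.inner_apply]
      rw [← Finset.sum_add_distrib]
      refine Finset.sum_le_sum fun i _ => ?_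
      simp only [RCLike.inner_apply, conj_trivial]
      have hb : |vs k i - f x (us k) i| ≤ ∑ j, L i j * |x j - xs k j| := by
        rw [hv k, abs_sub_comm]
        exact hLip x (xs k) (us k) (hu k) i
      have : p i * vs k i - p i * f x (us k) i ≤ |p i| * ∑ j, L i j * |x j - xs k j| :=
        calc p i * vs k i - p i * f x (us k) i = p i * (vs k i - f x (us k) i) := by ring
          _ ≤ |p i * (vs k i - f x (us k) i)| := le_abs_self _
          _ = |p i| * |vs k i - f x (us k) i| := abs_mul _ _
          _ ≤ |p i| * ∑ j, L i j * |x j - xs k j| :=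
            mul_le_mul_of_nonneg_left hb (abs_nonneg _)
      linarith
    exact h1.trans (le_csSup hH ⟨us k, hu k, rfl⟩)
end

section
/- Let Ĥ be the data-driven Hamiltonian built from a valid uncertainty set, and let i* attain the outer maximum at (x,p), i.e., i* = argmaxᵢ min_{ŵ ∈ E(x;x^i)} pᵀ(v^i + ŵ). Then the control u^{i*} from the dataset satisfies Ĥ(x,p) ≤ pᵀ f(x, u^{i*}); that is, playing the data-indexed control realizes at least the worst-case data-driven Hamiltonian value. -/
/-- The data-indexed control realizing the outer argmax of the DDH
achieves at least the DDH value. -/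
theorem ddh_argmax_control_realizes_value
    (n m N : ℕ) (hN : 0 < N)
    (f : EuclideanSpace ℝ (Fin n) → (Fin m → ℝ) → EuclideanSpace ℝ (Fin n))
    (xs : Fin N → EuclideanSpace ℝ (Fin n)) (us : Fin N → (Fin m → ℝ))
    (vs : Fin N → EuclideanSpace ℝ (Fin n))
    (E : EuclideanSpace ℝ (Fin n) → EuclideanSpace ℝ (Fin n) → Set (EuclideanSpace ℝ (Fin n)))
    (hv : ∀ i, vs i = f (xs i) (us i))
    (hE : ∀ i x, f x (us i) - vs i ∈ E x (xs i))
    (hcomp : ∀ i x, IsCompact (E x (xs i)) ∧ (E x (xs i)).Nonempty)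
    (x p : EuclideanSpace ℝ (Fin n)) (istar : Fin N)
    (hargmax : ∀ i, sInf ((fun w => (inner ℝ p (vs i + w) : ℝ)) '' E x (xs i))
        ≤ sInf ((fun w => (inner ℝ p (vs istar + w) : ℝ)) '' E x (xs istar))) :
    (⨆ i : Fin N, sInf ((fun w => (inner ℝ p (vs i + w) : ℝ)) '' E x (xs i)))
      ≤ (inner ℝ p (f x (us istar)) : ℝ) := by
  haveI : Nonempty (Fin N) := Fin.pos_iff_nonempty.mp hN
  have key : sInf ((fun w => (inner ℝ p (vs istar + w) : ℝ)) '' E x (xs istar))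
      ≤ (inner ℝ p (f x (us istar)) : ℝ) := by
    have hmem : (inner ℝ p (vs istar + (f x (us istar) - vs istar)) : ℝ)
        ∈ (fun w => (inner ℝ p (vs istar + w) : ℝ)) '' E x (xs istar) :=
      Set.mem_image_of_mem _ (hE istar x)
    have hbdd : BddBelow ((fun w => (inner ℝ p (vs istar + w) : ℝ)) '' E x (xs istar)) := by
      have hc : IsCompact ((fun w => (inner ℝ p (vs istar + w) : ℝ)) '' E x (xs istar)) :=
        (hcomp istar x).1.image (continuous_const.inner (continuous_const.add continuous_id))
      exact hc.bddBelow
    have := csInf_le hbdd hmem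
    simpa using this
  refine ciSup_le fun i => le_trans (hargmax i) key
end
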